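/- Let Λ₀(t, 0) be the local time at 0 of a sticky Brownian motion started at 0 with stickiness parameter ν > 0 (i.e., Λ₀(t,0) has tail probability P(Λ₀(t,0) > u) = 2 − 2Φ(u/√(t − 2νu)) for 0 < 2νu < t and 0 for 2νu ≥ t). Then E[Λ₀(t, 0)] = √(2/π) √t + ν (2 e^{t/(2ν²)}(1 − Φ(√t/ν)) − 1), and in particular E[Λ₀(t, 0)] = O(√t) as t → ∞. -/

import Mathlib

open MeasureTheory Real Filter Set Topology

noncomputable def stdGaussianCDF (x : ℝ) : ℝ :=
  ∫ y in Set.Iic x, (Real.sqrt (2 * Real.pi))⁻¹ * Real.exp (-y ^ 2 / 2)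

noncomputable def gpdf (x : ℝ) : ℝ := (Real.sqrt (2 * Real.pi))⁻¹ * Real.exp (-x ^ 2 / 2)

lemma gpdf_def (x : ℝ) : gpdf x = (Real.sqrt (2 * Real.pi))⁻¹ * Real.exp (-x ^ 2 / 2) := rfl

lemma gpdf_pos (x : ℝ) : 0 < gpdf x :=
  mul_pos (inv_pos.2 (Real.sqrt_pos.2 (by positivity))) (Real.exp_pos _)

lemma gpdf_le (x : ℝ) : gpdf x ≤ (Real.sqrt (2 * Real.pi))⁻¹ := by
  rw [gpdf]
  nth_rewrite 2 [← mul_one (Real.sqrt (2 * Real.pi))⁻¹]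
  gcongr
  exact Real.exp_le_one_iff.2 (by nlinarith [sq_nonneg x])

lemma neg_half_sq (x : ℝ) : -x ^ 2 / 2 = -(1/2 : ℝ) * x ^ 2 := by ring

lemma integrable_gpdf : Integrable gpdf := by
  have h : Integrable (fun x : ℝ => Real.exp (-(1/2 : ℝ) * x ^ 2)) := integrable_exp_neg_mul_sq (by norm_num)
  refine (h.const_mul (Real.sqrt (2 * Real.pi))⁻¹).congr (Eventually.of_forall fun x => ?_)
  rw [gpdf, neg_half_sq]

lemma sqrt_two_pi : Real.sqrt (Real.pi / (1/2)) = Real.sqrt (2 * Real.pi) := by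
  norm_num [mul_comm]

lemma integral_gpdf : ∫ x, gpdf x = 1 := by
  have h := integral_gaussian (1/2 : ℝ)
  rw [sqrt_two_pi] at h
  have h2 : ∫ x : ℝ, gpdf x = (Real.sqrt (2 * Real.pi))⁻¹ * ∫ x : ℝ, Real.exp (-(1/2:ℝ) * x ^ 2) := by
    rw [← integral_const_mul]
    congr 1; ext x; rw [gpdf, neg_half_sq]
  rw [h2, h, inv_mul_cancel₀ (by positivity)]

lemma cdf_eq (x : ℝ) : stdGaussianCDF x = ∫ y in Set.Iic x, gpdf y := rfl

lemma cdf_nonneg (x : ℝ) : 0 ≤ stdGaussianCDF x := by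
  rw [cdf_eq]
  exact setIntegral_nonneg measurableSet_Iic fun y _ => (gpdf_pos y).le

lemma cdf_le_one (x : ℝ) : stdGaussianCDF x ≤ 1 := by
  rw [cdf_eq, ← integral_gpdf]
  exact setIntegral_le_integral integrable_gpdf (Eventually.of_forall fun y => (gpdf_pos y).le)

lemma cdf_sub (a b : ℝ) : stdGaussianCDF b - stdGaussianCDF a = ∫ y in a..b, gpdf y := by
  rw [cdf_eq, cdf_eq]
  exact intervalIntegral.integral_Iic_sub_Iic integrable_gpdf.integrableOn integrable_gpdf.integrableOn

lemma cdf_hasDerivAt (x : ℝ) : HasDerivAt stdGaussianCDF (gpdf x) x := by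
  have h : ∀ y, stdGaussianCDF y = stdGaussianCDF 0 + ∫ u in (0:ℝ)..y, gpdf u := by
    intro y; rw [← cdf_sub]; ring
  have hd : HasDerivAt (fun y => stdGaussianCDF 0 + ∫ u in (0:ℝ)..y, gpdf u) (gpdf x) x := by
    apply HasDerivAt.const_add
    have hc : Continuous gpdf := by
      apply Continuous.mul continuous_const
      exact (Real.continuous_exp.comp (by continuity))
    exact intervalIntegral.integral_hasDerivAt_right integrable_gpdf.intervalIntegrable
      (hc.stronglyMeasurable.stronglyMeasurableAtFilter)
      hc.continuousAt
  exact hd.congr_of_eventuallyEq (Eventually.of_forall fun y => (h y))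

lemma cdf_continuous : Continuous stdGaussianCDF :=
  continuous_iff_continuousAt.2 fun x => (cdf_hasDerivAt x).continuousAt

lemma continuous_gpdf : Continuous gpdf :=
  continuous_const.mul (Real.continuous_exp.comp (by continuity))

lemma cdf_add_Ioi (x : ℝ) : stdGaussianCDF x + ∫ y in Ioi x, gpdf y = 1 := by
  rw [cdf_eq, ← integral_gpdf]
  rw [← intervalIntegral.integral_Iic_add_Ioi (b := x) integrable_gpdf.integrableOn integrable_gpdf.integrableOn]

lemma one_sub_cdf (x : ℝ) : 1 - stdGaussianCDF x = ∫ y in Ioi x, gpdf y := by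
  have := cdf_add_Ioi x; linarith

lemma cdf_zero : stdGaussianCDF 0 = 1/2 := by
  have h1 : stdGaussianCDF 0 = ∫ y in Ioi (0:ℝ), gpdf y := by
    rw [cdf_eq, ← neg_zero, ← integral_comp_neg_Iic]
    simp only [neg_zero]
    refine setIntegral_congr_fun measurableSet_Iic fun y _ => ?_
    simp [gpdf]
  have h2 := cdf_add_Ioi 0
  rw [← h1] at h2; linarith

lemma cdf_tendsto_one : Tendsto stdGaussianCDF atTop (𝓝 1) := by
  rw [← integral_gpdf]
  exact (aecover_Iic (tendsto_id)).integral_tendsto_of_countably_generated integrable_gpdf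

lemma integral_Ioi_mul_gpdf (x : ℝ) : ∫ y in Ioi x, y * gpdf y = gpdf x := by
  have hd : ∀ y ∈ Ici x, HasDerivAt (fun z => -gpdf z) (y * gpdf y) y := by
    intro y _
    have : HasDerivAt (fun z : ℝ => -z^2/2) (-y) y := by
      have := ((hasDerivAt_pow 2 y).neg).div_const 2
      simpa using this.congr_deriv (by push_cast; ring)
    have h2 := ((Real.hasDerivAt_exp (-y^2/2)).comp y this).const_mul (Real.sqrt (2 * Real.pi))⁻¹
    have h3 := h2.neg
    refine h3.congr_deriv ?_
    simp [gpdf]; ring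
  have hi : IntegrableOn (fun y => y * gpdf y) (Ioi x) := by
    have h := (integrable_mul_exp_neg_mul_sq (b := 1/2) (by norm_num)).const_mul (Real.sqrt (2 * Real.pi))⁻¹
    refine (h.congr (Eventually.of_forall fun y => ?_)).integrableOn
    rw [gpdf, neg_half_sq]; ring
  have htend : Tendsto (fun z => -gpdf z) atTop (𝓝 0) := by
    have h1 : Tendsto (fun z : ℝ => -z^2/2) atTop atBot := by
      apply Tendsto.atBot_div_const two_pos
      exact tendsto_neg_atBot_iff.2 (tendsto_pow_atTop two_ne_zero)
    have h2 : Tendsto gpdf atTop (𝓝 0) := by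
      have := (Real.tendsto_exp_atBot.comp h1).const_mul (Real.sqrt (2 * Real.pi))⁻¹
      simp only [mul_zero] at this
      exact this.congr (fun z => by simp [gpdf, Function.comp])
    simpa using h2.neg
  have := MeasureTheory.integral_Ioi_of_hasDerivAt_of_tendsto' (f := fun z => -gpdf z)
    (f' := fun y => y * gpdf y) (a := x) hd hi htend
  rw [this]; simp

lemma integrable_mul_gpdf : Integrable (fun y : ℝ => y * gpdf y) := by
  have h := (integrable_mul_exp_neg_mul_sq (b := 1/2) (by norm_num)).const_mul (Real.sqrt (2 * Real.pi))⁻¹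
  refine h.congr (Eventually.of_forall fun y => ?_)
  simp only [gpdf, neg_half_sq]; ring

lemma mills (x : ℝ) (hx : 0 < x) : 1 - stdGaussianCDF x ≤ gpdf x / x := by
  rw [one_sub_cdf]
  have h1 : ∫ y in Ioi x, gpdf y ≤ ∫ y in Ioi x, (y / x) * gpdf y := by
    refine setIntegral_mono_on integrable_gpdf.integrableOn
      ((integrable_mul_gpdf.integrableOn).div_const x |>.congr ?_) measurableSet_Ioi ?_
    · exact Eventually.of_forall fun y => by ring
    · intro y hy
      have hy1 : (1:ℝ) ≤ y / x := (one_le_div hx).2 (le_of_lt hy)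
      nth_rewrite 1 [← one_mul (gpdf y)]
      exact mul_le_mul_of_nonneg_right hy1 (gpdf_pos y).le
  have h2 : ∫ y in Ioi x, (y / x) * gpdf y = gpdf x / x := by
    have : ∀ y : ℝ, (y / x) * gpdf y = (1/x) * (y * gpdf y) := fun y => by ring
    simp_rw [this]
    rw [integral_const_mul, integral_Ioi_mul_gpdf]
    ring
  linarith

lemma gpdf_hasDerivAt (x : ℝ) : HasDerivAt gpdf (-x * gpdf x) x := by
  have h1 : HasDerivAt (fun z : ℝ => -z^2/2) (-x) x := by
    have := ((hasDerivAt_pow 2 x).neg).div_const 2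
    simpa using this.congr_deriv (by push_cast; ring)
  have h2 := ((Real.hasDerivAt_exp (-x^2/2)).comp x h1).const_mul (Real.sqrt (2 * Real.pi))⁻¹
  refine h2.congr_deriv ?_
  simp [gpdf]; ring

lemma gpdf_tendsto_zero : Tendsto gpdf atTop (𝓝 0) := by
  have h1 : Tendsto (fun z : ℝ => -z^2/2) atTop atBot := by
    apply Tendsto.atBot_div_const two_pos
    exact tendsto_neg_atBot_iff.2 (tendsto_pow_atTop two_ne_zero)
  have := (Real.tendsto_exp_atBot.comp h1).const_mul (Real.sqrt (2 * Real.pi))⁻¹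
  simp only [mul_zero] at this
  exact this.congr (fun z => by simp [gpdf, Function.comp])

lemma key (ν t : ℝ) (hν : 0 < ν) (ht : 0 < t) :
    ∫ u in (0:ℝ)..(t/(2*ν)),
        (2 - 2 * stdGaussianCDF (u / Real.sqrt (t - 2*ν*u)))
      = Real.sqrt (2/Real.pi) * Real.sqrt t
        + ν * (2 * Real.exp (t/(2*ν^2)) * (1 - stdGaussianCDF (Real.sqrt t / ν)) - 1) := by
  set T : ℝ := t/(2*ν) with hT
  have hT0 : 0 < T := by positivity
  set K : ℝ := Real.exp (t/(2*ν^2)) with hK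
  set E : ℝ → ℝ := fun u =>
    u * (2 - 2 * stdGaussianCDF (u / Real.sqrt (t - 2*ν*u)))
      - 2 * (gpdf (u / Real.sqrt (t - 2*ν*u)) * Real.sqrt (t - 2*ν*u))
      - (2*ν) * stdGaussianCDF (u / Real.sqrt (t - 2*ν*u))
      - (2*ν*K) * (1 - stdGaussianCDF ((t - ν*u) / (ν * Real.sqrt (t - 2*ν*u)))) with hE
  set G : ℝ → ℝ := fun u => if u < T then E u else -(2*ν) with hG
  -- basic facts
  have hpos : ∀ u : ℝ, u < T → 0 < t - 2*ν*u := by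
    intro u hu
    have : 2*ν*u < 2*ν*T := by
      apply mul_lt_mul_of_pos_left hu (by positivity)
    rw [hT] at this
    field_simp at this
    linarith
  -- derivative of E on Ioo 0 T
  have hderiv : ∀ u ∈ Ioo (0:ℝ) T, HasDerivAt G (2 - 2 * stdGaussianCDF (u / Real.sqrt (t - 2*ν*u))) u := by
    intro u hu
    obtain ⟨hu0, huT⟩ := hu
    have htu : 0 < t - 2*ν*u := hpos u huT
    set s : ℝ := Real.sqrt (t - 2*ν*u) with hs
    have hs0 : 0 < s := Real.sqrt_pos.2 htu
    have hs2 : s^2 = t - 2*ν*u := Real.sq_sqrt htu.le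
    have htnu : t - ν*u = s^2 + ν*u := by linarith
    have hts : t = s^2 + 2*ν*u := by linarith
    -- derivative of sqrt(t - 2νv)
    have hinner : HasDerivAt (fun v : ℝ => t - 2*ν*v) (-(2*ν)) u := by
      simpa using ((hasDerivAt_id u).const_mul (2*ν)).const_sub t
    have hsd : HasDerivAt (fun v : ℝ => Real.sqrt (t - 2*ν*v)) (-ν/s) u := by
      have := (Real.hasDerivAt_sqrt htu.ne').comp u hinner
      refine this.congr_deriv ?_
      field_simp
      ring
    -- derivative of g v = v / sqrt(t-2νv)
    have hgd : HasDerivAt (fun v : ℝ => v / Real.sqrt (t - 2*ν*v)) ((t - ν*u)/s^3) u := by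
      have := (hasDerivAt_id u).div hsd hs0.ne'
      refine this.congr_deriv ?_
      rw [← hs, htnu]
      field_simp
      simp only [id_eq]
      ring
    -- derivative of h v = (t - νv)/(ν sqrt(t-2νv))
    have hnum : HasDerivAt (fun v : ℝ => t - ν*v) (-ν) u := by
      simpa using ((hasDerivAt_id u).const_mul ν).const_sub t
    have hden : HasDerivAt (fun v : ℝ => ν * Real.sqrt (t - 2*ν*v)) (ν * (-ν/s)) u :=
      hsd.const_mul ν
    have hhd : HasDerivAt (fun v : ℝ => (t - ν*v) / (ν * Real.sqrt (t - 2*ν*v))) (ν*u/s^3) u := by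
      have hden0 : ν * s ≠ 0 := by positivity
      have := hnum.div hden hden0
      refine this.congr_deriv ?_
      rw [← hs, htnu]
      field_simp
      ring
    have hΦg : HasDerivAt (fun v : ℝ => stdGaussianCDF (v / Real.sqrt (t - 2*ν*v)))
        (gpdf (u/s) * ((t - ν*u)/s^3)) u :=
      by have h := (cdf_hasDerivAt (u/s)).comp u hgd; exact h
    have hΦh : HasDerivAt (fun v : ℝ => stdGaussianCDF ((t - ν*v) / (ν * Real.sqrt (t - 2*ν*v))))
        (gpdf ((t - ν*u)/(ν*s)) * (ν*u/s^3)) u :=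
      by have h := (cdf_hasDerivAt ((t - ν*u)/(ν*s))).comp u hhd; exact h
    have hgpg : HasDerivAt (fun v : ℝ => gpdf (v / Real.sqrt (t - 2*ν*v)))
        ((-(u/s) * gpdf (u/s)) * ((t - ν*u)/s^3)) u :=
      by have h := (gpdf_hasDerivAt (u/s)).comp u hgd; exact h
    -- assemble derivative of E
    have hA : HasDerivAt (fun v : ℝ => v * (2 - 2 * stdGaussianCDF (v / Real.sqrt (t - 2*ν*v))))
        (1 * (2 - 2 * stdGaussianCDF (u/s)) + u * (-(2 * (gpdf (u/s) * ((t - ν*u)/s^3))))) u :=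
      (hasDerivAt_id u).mul ((hΦg.const_mul 2).const_sub 2)
    have hB : HasDerivAt (fun v : ℝ => 2 * (gpdf (v / Real.sqrt (t - 2*ν*v)) * Real.sqrt (t - 2*ν*v)))
        (2 * (((-(u/s) * gpdf (u/s)) * ((t - ν*u)/s^3)) * s + gpdf (u/s) * (-ν/s))) u :=
      (hgpg.mul hsd).const_mul 2
    have hC : HasDerivAt (fun v : ℝ => (2*ν) * stdGaussianCDF (v / Real.sqrt (t - 2*ν*v)))
        ((2*ν) * (gpdf (u/s) * ((t - ν*u)/s^3))) u := hΦg.const_mul (2*ν)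
    have hD : HasDerivAt (fun v : ℝ => (2*ν*K) * (1 - stdGaussianCDF ((t - ν*v) / (ν * Real.sqrt (t - 2*ν*v)))))
        ((2*ν*K) * (-(gpdf ((t - ν*u)/(ν*s)) * (ν*u/s^3)))) u := by
      exact ((hΦh.const_sub 1).const_mul (2*ν*K))
    have hEd := ((hA.sub hB).sub hC).sub hD
    have hGE : G =ᶠ[𝓝 u] E := by
      filter_upwards [Iio_mem_nhds huT] with v hv
      exact if_pos hv
    have hexp : t/(2*ν^2) + -((t - ν*u)/(ν*s))^2/2 = -(u/s)^2/2 := by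
      rw [htnu, hts]
      field_simp
      ring
    have hKg : K * gpdf ((t - ν*u)/(ν*s)) = gpdf (u/s) := by
      rw [gpdf_def, gpdf_def, hK, mul_left_comm, ← Real.exp_add, hexp]
    have : HasDerivAt G (2 - 2 * stdGaussianCDF (u/s)) u := by
      refine (hEd.congr_of_eventuallyEq hGE).congr_deriv ?_
      have expand : (2*ν*K) * (-(gpdf ((t - ν*u)/(ν*s)) * (ν*u/s^3)))
          = -(2*ν) * (K * gpdf ((t - ν*u)/(ν*s))) * (ν*u/s^3) := by ring
      rw [expand, hKg, htnu]
      field_simp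
      ring
    simpa [hs] using this
  -- interval integrability of F
  have hFmeas : Measurable (fun u : ℝ => 2 - 2 * stdGaussianCDF (u / Real.sqrt (t - 2*ν*u))) := by
    apply Measurable.const_sub
    apply Measurable.const_mul
    exact cdf_continuous.measurable.comp
      (measurable_id.div ((Real.continuous_sqrt.comp (by continuity)).measurable))
  have hFint : IntervalIntegrable (fun u : ℝ => 2 - 2 * stdGaussianCDF (u / Real.sqrt (t - 2*ν*u)))
      volume 0 T := by
    rw [intervalIntegrable_iff_integrableOn_Icc_of_le hT0.le]
    refine ⟨hFmeas.aestronglyMeasurable.restrict, ?_⟩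
    apply HasFiniteIntegral.of_bounded (C := 2)
    filter_upwards with u
    rw [Real.norm_eq_abs, abs_le]
    constructor
    · have := cdf_le_one (u / Real.sqrt (t - 2*ν*u)); linarith
    · have := cdf_nonneg (u / Real.sqrt (t - 2*ν*u)); linarith
  -- continuity of G on [0, T]
  have hsqrt_cont : Continuous (fun v : ℝ => Real.sqrt (t - 2*ν*v)) :=
    Real.continuous_sqrt.comp (by continuity)
  have hcont : ContinuousOn G (Icc 0 T) := by
    intro x hx
    rcases eq_or_lt_of_le hx.2 with hxT | hxT
    · -- x = T
      rw [hxT]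
      have hGT : G T = -(2*ν) := if_neg (lt_irrefl T)
      rw [ContinuousWithinAt, hGT]
      have hsub : 𝓝[Icc 0 T] T ≤ 𝓝[Iio T] T ⊔ 𝓝[{T}] T := by
        rw [← nhdsWithin_union]
        apply nhdsWithin_mono
        intro y hy
        rcases eq_or_lt_of_le hy.2 with h | h
        · exact Or.inr h
        · exact Or.inl h
      refine Tendsto.mono_left ?_ hsub
      rw [tendsto_sup]
      constructor
      · -- within Iio T, G = E, and E tends to -(2ν)
        have l_s0 : Tendsto (fun u : ℝ => Real.sqrt (t - 2*ν*u)) (𝓝[<] T) (𝓝 0) := by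
          have hc := hsqrt_cont.tendsto T
          have hval : Real.sqrt (t - 2*ν*T) = 0 := by
            rw [hT]; field_simp; simp
          rw [hval] at hc
          exact hc.mono_left nhdsWithin_le_nhds
        have l_s : Tendsto (fun u : ℝ => Real.sqrt (t - 2*ν*u)) (𝓝[<] T) (𝓝[>] 0) := by
          rw [tendsto_nhdsWithin_iff]
          refine ⟨l_s0, ?_⟩
          filter_upwards [eventually_mem_nhdsWithin] with u hu
          exact Real.sqrt_pos.2 (hpos u hu)
        have l_id : Tendsto (fun u : ℝ => u) (𝓝[<] T) (𝓝 T) :=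
          tendsto_id.mono_left nhdsWithin_le_nhds
        have l_g : Tendsto (fun u : ℝ => u / Real.sqrt (t - 2*ν*u)) (𝓝[<] T) atTop := by
          simp only [div_eq_mul_inv]
          exact Tendsto.pos_mul_atTop hT0 l_id (tendsto_inv_nhdsGT_zero.comp l_s)
        have l_h : Tendsto (fun u : ℝ => (t - ν*u) / (ν * Real.sqrt (t - 2*ν*u))) (𝓝[<] T) atTop := by
          simp only [div_eq_mul_inv]
          have hnum : Tendsto (fun u : ℝ => t - ν*u) (𝓝[<] T) (𝓝 (t - ν*T)) :=
            ((continuous_const.sub (continuous_const.mul continuous_id)).tendsto T).mono_left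
              nhdsWithin_le_nhds
          have hνT : ν * T = t/2 := by rw [hT]; field_simp
          have hval : 0 < t - ν*T := by rw [hνT]; linarith
          have l_den : Tendsto (fun u : ℝ => ν * Real.sqrt (t - 2*ν*u)) (𝓝[<] T) (𝓝[>] 0) := by
            rw [tendsto_nhdsWithin_iff]
            constructor
            · have := (l_s0.const_mul ν); simpa using this
            · filter_upwards [eventually_mem_nhdsWithin] with u hu
              exact mul_pos hν (Real.sqrt_pos.2 (hpos u hu))
          exact Tendsto.pos_mul_atTop hval hnum (tendsto_inv_nhdsGT_zero.comp l_den)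
        have e1 : Tendsto (fun u : ℝ => stdGaussianCDF (u / Real.sqrt (t - 2*ν*u))) (𝓝[<] T) (𝓝 1) :=
          cdf_tendsto_one.comp l_g
        have e2 : Tendsto (fun u : ℝ => gpdf (u / Real.sqrt (t - 2*ν*u))) (𝓝[<] T) (𝓝 0) :=
          gpdf_tendsto_zero.comp l_g
        have e3 : Tendsto (fun u : ℝ => stdGaussianCDF ((t - ν*u) / (ν * Real.sqrt (t - 2*ν*u)))) (𝓝[<] T) (𝓝 1) :=
          cdf_tendsto_one.comp l_h
        have lE : Tendsto E (𝓝[<] T)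
            (𝓝 (T * (2 - 2*1) - 2*(0*0) - (2*ν)*1 - (2*ν*K)*(1-1))) := by
          rw [hE]
          exact (((l_id.mul ((e1.const_mul 2).const_sub 2)).sub
            ((e2.mul l_s0).const_mul 2)).sub (e1.const_mul (2*ν))).sub
            ((e3.const_sub 1).const_mul (2*ν*K))
        have lE' : Tendsto E (𝓝[<] T) (𝓝 (-(2*ν))) := by
          convert lE using 2; ring
        refine lE'.congr' ?_
        filter_upwards [eventually_mem_nhdsWithin] with u hu
        exact (if_pos hu).symm
      · -- within {T}
        rw [nhdsWithin_singleton, ← hGT]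
        exact tendsto_pure_nhds G T
    · -- x < T : G is eventually E, continuous
      have hx2 : 0 < t - 2*ν*x := hpos x hxT
      have hsx : Real.sqrt (t - 2*ν*x) ≠ 0 := (Real.sqrt_pos.2 hx2).ne'
      have cS : ContinuousAt (fun v : ℝ => Real.sqrt (t - 2*ν*v)) x := hsqrt_cont.continuousAt
      have cg : ContinuousAt (fun v : ℝ => v / Real.sqrt (t - 2*ν*v)) x :=
        continuousAt_id.div cS hsx
      have ch : ContinuousAt (fun v : ℝ => (t - ν*v) / (ν * Real.sqrt (t - 2*ν*v))) x := by
        apply ContinuousAt.div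
        · exact (continuous_const.sub (continuous_const.mul continuous_id)).continuousAt
        · exact (continuous_const.mul hsqrt_cont).continuousAt
        · exact mul_ne_zero hν.ne' hsx
      have cE : ContinuousAt E x := by
        rw [hE]
        apply ContinuousAt.sub
        apply ContinuousAt.sub
        apply ContinuousAt.sub
        · exact continuousAt_id.mul
            (((cdf_continuous.continuousAt.comp cg).const_mul 2).const_sub 2)
        · exact ((continuous_gpdf.continuousAt.comp cg).mul cS).const_mul 2
        · exact (cdf_continuous.continuousAt.comp cg).const_mul (2*ν)
        · exact ((cdf_continuous.continuousAt.comp ch).const_sub 1).const_mul (2*ν*K)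
      have hGE : G =ᶠ[𝓝 x] E := by
        filter_upwards [Iio_mem_nhds hxT] with v hv
        exact if_pos hv
      exact (cE.congr hGE.symm).continuousWithinAt
  -- FTC
  have hFTC := intervalIntegral.integral_eq_sub_of_hasDeriv_right_of_le hT0.le hcont
    (fun u hu => (hderiv u hu).hasDerivWithinAt) hFint
  -- endpoint values
  have hGT : G T = -(2*ν) := if_neg (lt_irrefl T)
  have hsqt : Real.sqrt t ≠ 0 := (Real.sqrt_pos.2 ht).ne'
  have hG0 : G 0 = -(2 * ((Real.sqrt (2*Real.pi))⁻¹ * Real.sqrt t)) - ν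
      - 2*ν*K*(1 - stdGaussianCDF (Real.sqrt t / ν)) := by
    have h0T : (0:ℝ) < T := hT0
    rw [hG]
    simp only [if_pos h0T, hE]
    have h1 : (0:ℝ) - 2*ν*0 = 0 := by ring
    have h2 : t - 2*ν*0 = t := by ring
    have h3 : t - ν*0 = t := by ring
    rw [h2, h3, zero_div, cdf_zero, gpdf_def]
    have h4 : t / (ν * Real.sqrt t) = Real.sqrt t / ν := by
      have hss : Real.sqrt t * Real.sqrt t = t := Real.mul_self_sqrt ht.le
      field_simp
      linear_combination (-1) * hss
    rw [h4]
    norm_num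
    ring
  rw [hFTC, hGT, hG0]
  have hsqrt2pi : Real.sqrt (2/Real.pi) = 2 * (Real.sqrt (2*Real.pi))⁻¹ := by
    rw [Real.sqrt_div (by norm_num : (0:ℝ) ≤ 2), Real.sqrt_mul (by norm_num : (0:ℝ) ≤ 2)]
    rw [eq_comm, mul_inv, ← mul_assoc]
    rw [div_eq_mul_inv]
    congr 1
    rw [show (2:ℝ) = Real.sqrt 2 * Real.sqrt 2 from (Real.mul_self_sqrt (by norm_num)).symm]
    field_simp
    rw [Real.sqrt_sq (Real.sqrt_nonneg 2)]
  rw [hsqrt2pi]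
  ring


theorem expected_sticky_local_time {Ω : Type*} [MeasurableSpace Ω] (P : Measure Ω)
    [IsProbabilityMeasure P] (ν t : ℝ) (hν : 0 < ν) (ht : 0 < t)
    (Λ : Ω → ℝ) (hmeas : Measurable Λ) (hnonneg : ∀ ω, 0 ≤ Λ ω)
    (htail : ∀ u : ℝ, 0 < u →
      P {ω | u < Λ ω} =
        if 2 * ν * u < t
          then ENNReal.ofReal (2 - 2 * stdGaussianCDF (u / Real.sqrt (t - 2 * ν * u)))
          else 0) :
    (∫ ω, Λ ω ∂P
        = Real.sqrt (2 / Real.pi) * Real.sqrt t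
          + ν * (2 * Real.exp (t / (2 * ν ^ 2))
              * (1 - stdGaussianCDF (Real.sqrt t / ν)) - 1)) ∧
    ∃ C > 0, ∀ t' : ℝ, 1 ≤ t' →
      Real.sqrt (2 / Real.pi) * Real.sqrt t'
          + ν * (2 * Real.exp (t' / (2 * ν ^ 2))
              * (1 - stdGaussianCDF (Real.sqrt t' / ν)) - 1)
        ≤ C * Real.sqrt t' := by
  constructor
  · -- the exact value
    have hT0 : 0 < t / (2*ν) := by positivity
    have hFnn : ∀ u : ℝ, 0 ≤ 2 - 2 * stdGaussianCDF (u / Real.sqrt (t - 2*ν*u)) := by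
      intro u
      have := cdf_le_one (u / Real.sqrt (t - 2*ν*u))
      linarith
    have hFmeas : Measurable (fun u : ℝ => 2 - 2 * stdGaussianCDF (u / Real.sqrt (t - 2*ν*u))) := by
      apply Measurable.const_sub
      apply Measurable.const_mul
      exact cdf_continuous.measurable.comp
        (measurable_id.div ((Real.continuous_sqrt.comp (by continuity)).measurable))
    have hFbd : ∀ u : ℝ, ‖2 - 2 * stdGaussianCDF (u / Real.sqrt (t - 2*ν*u))‖ ≤ 2 := by
      intro u
      rw [Real.norm_eq_abs, abs_le]
      have h1 := cdf_le_one (u / Real.sqrt (t - 2*ν*u))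
      have h2 := cdf_nonneg (u / Real.sqrt (t - 2*ν*u))
      constructor <;> linarith
    have hFint : IntegrableOn (fun u : ℝ => 2 - 2 * stdGaussianCDF (u / Real.sqrt (t - 2*ν*u)))
        (Ioo 0 (t/(2*ν))) := by
      refine ⟨hFmeas.aestronglyMeasurable.restrict, ?_⟩
      have : IsFiniteMeasure (volume.restrict (Ioo (0:ℝ) (t/(2*ν)))) := by
        constructor
        rw [Measure.restrict_apply_univ]
        exact measure_Ioo_lt_top
      exact HasFiniteIntegral.of_bounded (C := 2) (Eventually.of_forall hFbd)
    have hlayer : ∫⁻ ω, ENNReal.ofReal (Λ ω) ∂P = ∫⁻ u in Ioi (0:ℝ), P {ω | u < Λ ω} :=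
      lintegral_eq_lintegral_meas_lt P (Eventually.of_forall hnonneg) hmeas.aemeasurable
    have hiff : ∀ u : ℝ, (2 * ν * u < t ↔ u < t/(2*ν)) := by
      intro u
      rw [lt_div_iff₀ (by positivity : (0:ℝ) < 2*ν)]
      constructor <;> intro h <;> nlinarith
    have hdisj : Disjoint (Ioo (0:ℝ) (t/(2*ν))) (Ici (t/(2*ν))) :=
      (Iio_disjoint_Ici le_rfl).mono_left Ioo_subset_Iio_self
    have hsplit : Ioi (0:ℝ) = Ioo 0 (t/(2*ν)) ∪ Ici (t/(2*ν)) := (Ioo_union_Ici_eq_Ioi hT0).symm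
    have h2 : ∫⁻ u in Ioi (0:ℝ), P {ω | u < Λ ω}
        = ∫⁻ u in Ioo (0:ℝ) (t/(2*ν)),
            ENNReal.ofReal (2 - 2 * stdGaussianCDF (u / Real.sqrt (t - 2*ν*u))) := by
      rw [hsplit, lintegral_union measurableSet_Ici hdisj]
      have hz : ∫⁻ u in Ici (t/(2*ν)), P {ω | u < Λ ω} = 0 := by
        have hz0 : ∀ᵐ u ∂volume, u ∈ Ici (t/(2*ν)) → P {ω | u < Λ ω} = 0 := by
          refine Eventually.of_forall fun u hu => ?_
          rw [htail u (lt_of_lt_of_le hT0 hu), if_neg]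
          rw [hiff u]
          exact not_lt.2 hu
        rw [setLIntegral_congr_fun_ae measurableSet_Ici hz0, lintegral_zero]
      rw [hz, add_zero]
      refine setLIntegral_congr_fun_ae measurableSet_Ioo (Eventually.of_forall fun u hu => ?_)
      rw [htail u hu.1, if_pos ((hiff u).2 hu.2)]
    have h3 : ∫⁻ u in Ioo (0:ℝ) (t/(2*ν)),
          ENNReal.ofReal (2 - 2 * stdGaussianCDF (u / Real.sqrt (t - 2*ν*u)))
        = ENNReal.ofReal (∫ u in Ioo (0:ℝ) (t/(2*ν)),
            (2 - 2 * stdGaussianCDF (u / Real.sqrt (t - 2*ν*u)))) :=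
      (ofReal_integral_eq_lintegral_ofReal hFint (Eventually.of_forall hFnn)).symm
    have h4 : ∫ u in Ioo (0:ℝ) (t/(2*ν)), (2 - 2 * stdGaussianCDF (u / Real.sqrt (t - 2*ν*u)))
        = ∫ u in (0:ℝ)..(t/(2*ν)), (2 - 2 * stdGaussianCDF (u / Real.sqrt (t - 2*ν*u))) := by
      rw [intervalIntegral.integral_of_le hT0.le, integral_Ioc_eq_integral_Ioo]
    have hkey := key ν t hν ht
    have hInn : 0 ≤ ∫ u in Ioo (0:ℝ) (t/(2*ν)),
        (2 - 2 * stdGaussianCDF (u / Real.sqrt (t - 2*ν*u))) :=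
      setIntegral_nonneg measurableSet_Ioo (fun u _ => hFnn u)
    have hRHSnn : 0 ≤ Real.sqrt (2 / Real.pi) * Real.sqrt t
        + ν * (2 * Real.exp (t / (2 * ν ^ 2)) * (1 - stdGaussianCDF (Real.sqrt t / ν)) - 1) := by
      rw [← hkey, ← h4]; exact hInn
    have hval : ∫⁻ ω, ENNReal.ofReal (Λ ω) ∂P
        = ENNReal.ofReal (Real.sqrt (2 / Real.pi) * Real.sqrt t
            + ν * (2 * Real.exp (t / (2 * ν ^ 2))
              * (1 - stdGaussianCDF (Real.sqrt t / ν)) - 1)) := by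
      rw [hlayer, h2, h3, h4, hkey]
    rw [integral_eq_lintegral_of_nonneg_ae (Eventually.of_forall hnonneg)
      hmeas.aestronglyMeasurable, hval, ENNReal.toReal_ofReal hRHSnn]
  · -- the O(√t) bound
    refine ⟨1 + ν^2, by positivity, ?_⟩
    intro t' ht'
    have ht'0 : (0:ℝ) < t' := lt_of_lt_of_le one_pos ht'
    have hst : 1 ≤ Real.sqrt t' := by
      rw [show (1:ℝ) = Real.sqrt 1 from (Real.sqrt_one).symm]
      exact Real.sqrt_le_sqrt ht'
    have hst0 : 0 < Real.sqrt t' := lt_of_lt_of_le one_pos hst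
    set x : ℝ := Real.sqrt t' / ν with hx
    have hx0 : 0 < x := by positivity
    have hx2 : x^2 = t'/ν^2 := by rw [hx, div_pow, Real.sq_sqrt ht'0.le]
    have hmills := mills x hx0
    have hexp1 : Real.exp (t'/(2*ν^2)) * Real.exp (-x^2/2) = 1 := by
      rw [← Real.exp_add, hx2]
      rw [show t'/(2*ν^2) + -(t'/ν^2)/2 = 0 from by field_simp; ring, Real.exp_zero]
    have hgx : Real.exp (t'/(2*ν^2)) * gpdf x = (Real.sqrt (2*Real.pi))⁻¹ := by
      rw [gpdf_def, mul_left_comm, hexp1, mul_one]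
    have hsqrt4 : Real.sqrt 4 = 2 := by
      rw [show (4:ℝ) = 2^2 from by norm_num, Real.sqrt_sq (by norm_num : (0:ℝ) ≤ 2)]
    have h2le : (2:ℝ) ≤ Real.sqrt (2*Real.pi) := by
      rw [← hsqrt4]
      exact Real.sqrt_le_sqrt (by nlinarith [Real.pi_gt_three])
    have h2pi : 2 * (Real.sqrt (2*Real.pi))⁻¹ ≤ 1 := by
      have hpos : (0:ℝ) < Real.sqrt (2*Real.pi) := by positivity
      have hi : (Real.sqrt (2*Real.pi))⁻¹ ≤ 2⁻¹ := by
        apply inv_anti₀ (by norm_num) h2le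
      linarith
    have hb : 2 * Real.exp (t'/(2*ν^2)) * (1 - stdGaussianCDF x) ≤ ν / Real.sqrt t' := by
      have step : 2 * Real.exp (t'/(2*ν^2)) * (1 - stdGaussianCDF x)
          ≤ 2 * Real.exp (t'/(2*ν^2)) * (gpdf x / x) := by
        apply mul_le_mul_of_nonneg_left hmills (by positivity)
      have eq1 : 2 * Real.exp (t'/(2*ν^2)) * (gpdf x / x)
          = 2 * (Real.sqrt (2*Real.pi))⁻¹ * (ν / Real.sqrt t') := by
        rw [show 2 * Real.exp (t'/(2*ν^2)) * (gpdf x / x)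
            = 2 * (Real.exp (t'/(2*ν^2)) * gpdf x) / x from by ring, hgx, hx]
        rw [div_div_eq_mul_div]
        ring
      have le2 : 2 * (Real.sqrt (2*Real.pi))⁻¹ * (ν / Real.sqrt t') ≤ 1 * (ν / Real.sqrt t') :=
        mul_le_mul_of_nonneg_right h2pi (by positivity)
      rw [one_mul] at le2
      linarith [step, eq1.le, eq1.ge]
    have hsq1 : Real.sqrt (2/Real.pi) ≤ 1 := by
      rw [show (1:ℝ) = Real.sqrt 1 from (Real.sqrt_one).symm]
      apply Real.sqrt_le_sqrt
      rw [div_le_one Real.pi_pos]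
      linarith [Real.pi_gt_three]
    have h6 : ν * (2 * Real.exp (t'/(2*ν^2)) * (1 - stdGaussianCDF x)) ≤ ν * (ν / Real.sqrt t') :=
      mul_le_mul_of_nonneg_left hb hν.le
    have h8 : ν * (ν / Real.sqrt t') ≤ ν^2 := by
      rw [show ν * (ν / Real.sqrt t') = ν^2 / Real.sqrt t' from by ring, div_le_iff₀ hst0]
      nlinarith [sq_nonneg ν]
    have h9 : ν^2 ≤ ν^2 * Real.sqrt t' := by nlinarith [sq_nonneg ν]
    have h10 : Real.sqrt (2/Real.pi) * Real.sqrt t' ≤ 1 * Real.sqrt t' :=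
      mul_le_mul_of_nonneg_right hsq1 hst0.le
    have hexpand : ν * (2 * Real.exp (t'/(2*ν^2)) * (1 - stdGaussianCDF x) - 1)
        = ν * (2 * Real.exp (t'/(2*ν^2)) * (1 - stdGaussianCDF x)) - ν := by ring
    rw [hexpand]
    nlinarith [h6, h8, h9, h10, hν]
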